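/- For every ε ∈ (0, 1/2), every real z ≥ 1, every integer k ≥ 1, and every γ ≥ 1, there exists ε'₀ > 0 depending only on ε, z, and γ such that the following holds for all 0 < ε' ≤ ε'₀ and every integer d ≥ 1. Let X ⊆ ℝ^d be finite, let C' ⊆ ℝ^d be nonempty with |C'| ≤ k satisfying Cost(X, C') ≤ γ · Cost(X, C) for every nonempty finite C ⊆ ℝ^d with |C| ≤ k, and suppose for each x ∈ X a point x' ∈ ℝ^d is given with ‖x − x'‖₂ ≤ ε' · dist(x, C'). Let X = X₁ ⊔ … ⊔ X_m be any partition of X. Then for every i ∈ {1,…,m} and every nonempty finite C ⊆ ℝ^d with |C| ≤ k: | Σ_{x∈X_i} dist(x', C)^z − Cost(X_i, C) | ≤ ε · Cost(X, C). -/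

import Mathlib

open scoped BigOperators

/-- `dSet x C` is the distance from the point `x` to the finite set `C`. -/
noncomputable def dSet {d : ℕ} (x : EuclideanSpace ℝ (Fin d))
    (C : Finset (EuclideanSpace ℝ (Fin d))) : ℝ :=
  sInf ((fun c => dist x c) '' (C : Set (EuclideanSpace ℝ (Fin d))))

/-- `kzCost z X C = Σ_{x ∈ X} dist(x,C)^z`. -/
noncomputable def kzCost {d : ℕ} (z : ℝ) (X C : Finset (EuclideanSpace ℝ (Fin d))) : ℝ :=
  ∑ x ∈ X, dSet x C ^ z

lemma dSet_eq_infDist {d : ℕ} (x : EuclideanSpace ℝ (Fin d))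
    (C : Finset (EuclideanSpace ℝ (Fin d))) :
    dSet x C = Metric.infDist x (C : Set (EuclideanSpace ℝ (Fin d))) := by
  rw [Metric.infDist_eq_iInf, dSet, Set.image_eq_range]
  rfl

lemma dSet_nonneg {d : ℕ} (x : EuclideanSpace ℝ (Fin d))
    (C : Finset (EuclideanSpace ℝ (Fin d))) : 0 ≤ dSet x C := by
  rw [dSet_eq_infDist]; exact Metric.infDist_nonneg

lemma abs_dSet_sub {d : ℕ} (x y : EuclideanSpace ℝ (Fin d))
    (C : Finset (EuclideanSpace ℝ (Fin d))) :
    |dSet x C - dSet y C| ≤ dist x y := by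
  rw [dSet_eq_infDist, dSet_eq_infDist, abs_sub_le_iff]
  constructor
  · have := Metric.infDist_le_infDist_add_dist (s := (C : Set _)) (x := x) (y := y)
    linarith
  · have := Metric.infDist_le_infDist_add_dist (s := (C : Set _)) (x := y) (y := x)
    rw [dist_comm] at this
    linarith

lemma kzCost_nonneg {d : ℕ} (z : ℝ) (X C : Finset (EuclideanSpace ℝ (Fin d))) :
    0 ≤ kzCost z X C :=
  Finset.sum_nonneg fun x _ => Real.rpow_nonneg (dSet_nonneg x C) z

lemma kzCost_mono {d : ℕ} (z : ℝ) {X Y : Finset (EuclideanSpace ℝ (Fin d))}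
    (C : Finset (EuclideanSpace ℝ (Fin d))) (h : X ⊆ Y) :
    kzCost z X C ≤ kzCost z Y C :=
  Finset.sum_le_sum_of_subset_of_nonneg h
    (fun x _ _ => Real.rpow_nonneg (dSet_nonneg x C) z)

lemma rpow_helper {z s δ : ℝ} (hz : 1 ≤ z) (hs : 0 < s) (hδ : 0 ≤ δ)
    {u v : ℝ} (hu : 0 ≤ u) (hv : 0 ≤ v) (h : v ≤ u + δ) :
    v ^ z ≤ (1 + s) ^ z * u ^ z + ((1 + s) / s) ^ z * δ ^ z := by
  have hz0 : (0:ℝ) ≤ z := by linarith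
  have hK : 0 ≤ ((1 + s) / s) ^ z :=
    Real.rpow_nonneg (div_nonneg (by linarith) hs.le) z
  rcases le_or_gt v ((1 + s) * u) with hcase | hcase
  · have h1 : v ^ z ≤ ((1 + s) * u) ^ z := Real.rpow_le_rpow hv hcase hz0
    rw [Real.mul_rpow (by linarith) hu] at h1
    have : 0 ≤ ((1 + s) / s) ^ z * δ ^ z :=
      mul_nonneg hK (Real.rpow_nonneg hδ z)
    linarith
  · have hu' : u < δ / s := by
      rw [lt_div_iff₀ hs]
      nlinarith
    have h2 : v ≤ (1 + s) / s * δ := by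
      have : δ / s + δ = (1 + s) / s * δ := by field_simp
      linarith [div_nonneg hδ hs.le]
    have h3 : v ^ z ≤ ((1 + s) / s * δ) ^ z := Real.rpow_le_rpow hv h2 hz0
    rw [Real.mul_rpow (div_nonneg (by linarith) hs.le) hδ] at h3
    have : 0 ≤ (1 + s) ^ z * u ^ z :=
      mul_nonneg (Real.rpow_nonneg (by linarith) z) (Real.rpow_nonneg hu z)
    linarith

lemma key_rpow {z s a b δ : ℝ} (hz : 1 ≤ z) (hs : 0 < s)
    (ha : 0 ≤ a) (hb : 0 ≤ b) (hab : |a - b| ≤ δ) :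
    |b ^ z - a ^ z| ≤ ((1 + s) ^ z - 1) * a ^ z + ((1 + s) / s) ^ z * δ ^ z := by
  have hδ : 0 ≤ δ := le_trans (abs_nonneg _) hab
  have hz0 : (0:ℝ) ≤ z := by linarith
  have hone : 1 ≤ (1 + s) ^ z := Real.one_le_rpow (by linarith) hz0
  have hK : 0 ≤ ((1 + s) / s) ^ z :=
    Real.rpow_nonneg (div_nonneg (by linarith) hs.le) z
  have hKδ : 0 ≤ ((1 + s) / s) ^ z * δ ^ z := mul_nonneg hK (Real.rpow_nonneg hδ z)
  rw [abs_sub_le_iff] at hab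
  rw [abs_sub_le_iff]
  constructor
  · have := rpow_helper hz hs hδ ha hb (by linarith [hab.2])
    linarith
  · rcases le_total a b with hle | hle
    · have : a ^ z ≤ b ^ z := Real.rpow_le_rpow ha hle hz0
      have h1 : 0 ≤ ((1 + s) ^ z - 1) * a ^ z :=
        mul_nonneg (by linarith) (Real.rpow_nonneg ha z)
      linarith
    · have hba : b ^ z ≤ a ^ z := Real.rpow_le_rpow hb hle hz0
      have h2 := rpow_helper hz hs hδ hb ha (by linarith [hab.1])
      have h3 : ((1 + s) ^ z - 1) * b ^ z ≤ ((1 + s) ^ z - 1) * a ^ z :=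
        mul_le_mul_of_nonneg_left hba (by linarith)
      nlinarith

/-- Rounding offsets with respect to a single global `γ`-approximation `C'` preserves the
clustering cost of each part `X_i` of a partition of `X` up to additive error
`ε·Cost(X,C)`, provided `ε'` is small enough depending only on `ε`, `z`, `γ`. -/
theorem rounded_offsets_partition_additive_error
    (ε : ℝ) (hε0 : 0 < ε) (hε : ε < 1 / 2) (z : ℝ) (hz : 1 ≤ z)
    (γ : ℝ) (hγ : 1 ≤ γ) :
    ∃ ε'₀ : ℝ, 0 < ε'₀ ∧
      ∀ (k : ℕ), 1 ≤ k → ∀ ε' : ℝ, 0 < ε' → ε' ≤ ε'₀ → ∀ (d : ℕ), 1 ≤ d →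
        ∀ (X C' : Finset (EuclideanSpace ℝ (Fin d))), C'.Nonempty → C'.card ≤ k →
          (∀ C : Finset (EuclideanSpace ℝ (Fin d)), C.Nonempty → C.card ≤ k →
            kzCost z X C' ≤ γ * kzCost z X C) →
          ∀ f : EuclideanSpace ℝ (Fin d) → EuclideanSpace ℝ (Fin d),
            (∀ x ∈ X, dist x (f x) ≤ ε' * dSet x C') →
            ∀ (m : ℕ) (P : Fin m → Finset (EuclideanSpace ℝ (Fin d))),
              (∀ i j, i ≠ j → Disjoint (P i) (P j)) →
              (∀ y, y ∈ X ↔ ∃ i, y ∈ P i) →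
              ∀ (i : Fin m) (C : Finset (EuclideanSpace ℝ (Fin d))),
                C.Nonempty → C.card ≤ k →
                |(∑ x ∈ P i, dSet (f x) C ^ z) - kzCost z (P i) C| ≤
                  ε * kzCost z X C := by
  have hz0 : (0:ℝ) < z := by linarith
  have hzne : z ≠ 0 := ne_of_gt hz0
  -- choose s so that (1+s)^z = 1 + ε/2
  set t : ℝ := (1 + ε / 2) ^ z⁻¹ with ht
  have ht1 : 1 < t := by
    rw [ht]
    exact (Real.one_lt_rpow_iff_of_pos (by linarith)).2 (Or.inl ⟨by linarith, by positivity⟩)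
  set s : ℝ := t - 1 with hsdef
  have hs : 0 < s := by simp [hsdef]; linarith
  have h1s : 1 + s = t := by ring
  have htz : (1 + s) ^ z = 1 + ε / 2 := by
    rw [h1s, ht]; exact Real.rpow_inv_rpow (by linarith) hzne
  set K : ℝ := ((1 + s) / s) ^ z with hKdef
  have hKpos : 0 < K := Real.rpow_pos_of_pos (by positivity) z
  have hγ0 : (0:ℝ) < γ := by linarith
  set B : ℝ := (ε / (2 * γ * K)) ^ z⁻¹ with hB
  have hBpos : 0 < B := Real.rpow_pos_of_pos (by positivity) z⁻¹
  refine ⟨min 1 B, lt_min one_pos hBpos, ?_⟩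
  intro k hk ε' hε'0 hε'le d hd X C' hC'ne hC'card hCost f hf m P hdisj hcover i C hCne hCcard
  -- bound on ε'^z
  have hε'B : ε' ≤ B := le_trans hε'le (min_le_right _ _)
  have hε'z : ε' ^ z ≤ ε / (2 * γ * K) := by
    calc ε' ^ z ≤ B ^ z := Real.rpow_le_rpow hε'0.le hε'B hz0.le
    _ = ε / (2 * γ * K) := Real.rpow_inv_rpow (by positivity) hzne
  have hPsub : P i ⊆ X := fun y hy => (hcover y).2 ⟨i, hy⟩
  -- pointwise bound
  have hpt : ∀ x ∈ P i,
      |dSet (f x) C ^ z - dSet x C ^ z| ≤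
        ((1 + s) ^ z - 1) * dSet x C ^ z + K * (ε' ^ z * dSet x C' ^ z) := by
    intro x hx
    have hxX : x ∈ X := hPsub hx
    have habs : |dSet x C - dSet (f x) C| ≤ ε' * dSet x C' :=
      le_trans (abs_dSet_sub x (f x) C) (hf x hxX)
    have := key_rpow (z := z) (s := s) hz hs (dSet_nonneg x C) (dSet_nonneg (f x) C) habs
    rwa [Real.mul_rpow hε'0.le (dSet_nonneg x C')] at this
  -- sum bound
  have hsum : |(∑ x ∈ P i, dSet (f x) C ^ z) - kzCost z (P i) C| ≤
      ((1 + s) ^ z - 1) * kzCost z (P i) C + K * ε' ^ z * kzCost z (P i) C' := by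
    rw [kzCost, ← Finset.sum_sub_distrib]
    calc |∑ x ∈ P i, (dSet (f x) C ^ z - dSet x C ^ z)|
        ≤ ∑ x ∈ P i, |dSet (f x) C ^ z - dSet x C ^ z| := Finset.abs_sum_le_sum_abs _ _
      _ ≤ ∑ x ∈ P i, (((1 + s) ^ z - 1) * dSet x C ^ z + K * (ε' ^ z * dSet x C' ^ z)) :=
          Finset.sum_le_sum hpt
      _ = ((1 + s) ^ z - 1) * kzCost z (P i) C + K * ε' ^ z * kzCost z (P i) C' := by
          simp only [Finset.sum_add_distrib, ← Finset.mul_sum, kzCost]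
          ring
  have hC1 : kzCost z (P i) C ≤ kzCost z X C := kzCost_mono z C hPsub
  have hC2 : kzCost z (P i) C' ≤ γ * kzCost z X C :=
    le_trans (kzCost_mono z C' hPsub) (hCost C hCne hCcard)
  have hXC0 : 0 ≤ kzCost z X C := kzCost_nonneg z X C
  have hPC0 : 0 ≤ kzCost z (P i) C' := kzCost_nonneg z (P i) C'
  have hKε' : 0 ≤ K * ε' ^ z := mul_nonneg hKpos.le (Real.rpow_nonneg hε'0.le z)
  have hcoef : ((1 + s) ^ z - 1) = ε / 2 := by rw [htz]; ring
  have hmain : K * ε' ^ z * kzCost z (P i) C' ≤ (ε / 2) * kzCost z X C := by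
    have h1 : K * ε' ^ z * kzCost z (P i) C' ≤ K * ε' ^ z * (γ * kzCost z X C) :=
      mul_le_mul_of_nonneg_left hC2 hKε'
    have h2 : K * ε' ^ z ≤ ε / (2 * γ) := by
      have := mul_le_mul_of_nonneg_left hε'z hKpos.le
      calc K * ε' ^ z ≤ K * (ε / (2 * γ * K)) := this
        _ = ε / (2 * γ) := by field_simp
    have h3 : K * ε' ^ z * (γ * kzCost z X C) ≤ (ε / (2 * γ)) * (γ * kzCost z X C) :=
      mul_le_mul_of_nonneg_right h2 (mul_nonneg hγ0.le hXC0)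
    have h4 : (ε / (2 * γ)) * (γ * kzCost z X C) = (ε / 2) * kzCost z X C := by
      field_simp
    linarith
  have hfirst : ((1 + s) ^ z - 1) * kzCost z (P i) C ≤ (ε / 2) * kzCost z X C := by
    rw [hcoef]
    exact mul_le_mul_of_nonneg_left hC1 (by linarith)
  calc |(∑ x ∈ P i, dSet (f x) C ^ z) - kzCost z (P i) C|
      ≤ ((1 + s) ^ z - 1) * kzCost z (P i) C + K * ε' ^ z * kzCost z (P i) C' := hsum
    _ ≤ (ε / 2) * kzCost z X C + (ε / 2) * kzCost z X C := by linarith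
    _ = ε * kzCost z X C := by ring
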